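/- (Underrepresented-set counting in the controlled greedy process.) Suppose y : S → [0,1] satisfies Σ_{j∈S} y_j = K and, for each j and each τ ∈ [0, y_j), the set Y_j(τ) = {k : t_{jk} = 1 and v_{jk} + c_k τ < γ/√d} has |Y_j(τ)| ≥ √d, where v_{jk} ≥ 0 are the accumulated utilities before j. If additionally γ ≤ c_k K for every k, then for every dimension k: Σ_{j∈S} ∫₀^{y_j} 1[k ∈ Y_j(τ)] dτ = γ/(√d c_k). -/

import Mathlib

open MeasureTheory Set

lemma intlem (b β : ℝ) (hb : 0 ≤ b) :
    ∫ τ in Set.Ioc (0:ℝ) b, (if τ < β then (1:ℝ) else 0) = min b (max β 0) := by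
  have h1 : (fun τ : ℝ => if τ < β then (1:ℝ) else 0) = (Set.Iio β).indicator (fun _ => 1) := by
    funext τ; simp [Set.indicator, Set.mem_Iio]
  rw [h1, MeasureTheory.setIntegral_indicator measurableSet_Iio,
    MeasureTheory.setIntegral_const, smul_eq_mul, mul_one]
  rcases le_or_gt β 0 with h | h
  · have he : Set.Ioc (0:ℝ) b ∩ Set.Iio β = ∅ := by
      ext τ; simp only [Set.mem_inter_iff, Set.mem_Ioc, Set.mem_Iio, Set.mem_empty_iff_false,
        iff_false]
      rintro ⟨⟨h1, h2⟩, h3⟩; linarith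
    rw [he]
    simp [max_eq_right h, min_eq_right hb]
  · rcases le_or_gt β b with h2 | h2
    · have he : Set.Ioc (0:ℝ) b ∩ Set.Iio β = Set.Ioo 0 β := by
        ext τ; simp only [Set.mem_inter_iff, Set.mem_Ioc, Set.mem_Iio, Set.mem_Ioo]
        constructor
        · rintro ⟨⟨ha, hb'⟩, hc⟩; exact ⟨ha, hc⟩
        · rintro ⟨ha, hc⟩; exact ⟨⟨ha, by linarith⟩, hc⟩
      rw [he, Real.volume_real_Ioo_of_le (by linarith)]
      rw [max_eq_left h.le, min_eq_right h2]; ring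
    · have he : Set.Ioc (0:ℝ) b ∩ Set.Iio β = Set.Ioc 0 b := by
        ext τ; simp only [Set.mem_inter_iff, Set.mem_Ioc, Set.mem_Iio]
        constructor
        · rintro ⟨ha, _⟩; exact ha
        · rintro ⟨ha, hb'⟩; exact ⟨⟨ha, hb'⟩, by linarith⟩
      rw [he, Real.volume_real_Ioc_of_le (by linarith)]
      rw [max_eq_left h.le, min_eq_left h2.le]
      ring

lemma arith (A S b : ℝ) (hS : 0 ≤ S) (hb : 0 ≤ b) :
    min b (max (A - S) 0) = min A (S + b) - min A S := by
  rcases le_total A S with h | h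
  · rw [max_eq_right (by linarith), min_eq_right hb, min_eq_left h, min_eq_left (by linarith)]
    ring
  · rcases le_total A (S + b) with h2 | h2
    · rw [max_eq_left (by linarith), min_eq_right (by linarith), min_eq_left h2,
        min_eq_right h]
    · rw [max_eq_left (by linarith), min_eq_left (by linarith), min_eq_right (by linarith),
        min_eq_right h]
      ring

theorem stmt17 (d m : ℕ) (hd : 0 < d) (K : ℕ) (hK : 0 < K) (γ : ℝ) (hγ : 0 < γ)
    (c : Fin d → ℝ) (hc : ∀ k, 0 < c k)
    (t : Fin m → Fin d → ℝ) (ht : ∀ j k, t j k = 0 ∨ t j k = 1)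
    (y : Fin m → ℝ) (hy : ∀ j, 0 ≤ y j ∧ y j ≤ 1) (hysum : ∑ j, y j = (K : ℝ))
    (v : Fin m → Fin d → ℝ)
    (hv : ∀ j k, v j k =
      c k * ∑ j' ∈ Finset.univ.filter (fun j' => j' < j), y j' * t j' k)
    (hγK : ∀ k, γ ≤ c k * K)
    (hbig : ∀ j, ∀ τ : ℝ, 0 ≤ τ → τ < y j →
      Real.sqrt d ≤ (Finset.univ.filter
        (fun k : Fin d => t j k = 1 ∧ v j k + c k * τ < γ / Real.sqrt d)).card) :
    ∀ k : Fin d,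
      ∑ j, (∫ τ in Set.Ioc (0 : ℝ) (y j),
        (if t j k = 1 ∧ v j k + c k * τ < γ / Real.sqrt d then (1 : ℝ) else 0))
      = γ / (Real.sqrt d * c k) := by
  have hd' : (0:ℝ) < d := by exact_mod_cast hd
  set sd := Real.sqrt d with hsd_def
  have hsd : 0 < sd := Real.sqrt_pos.2 hd'
  set B := γ / sd with hB_def
  set F : Fin d → ℝ := fun k => ∑ j, (∫ τ in Set.Ioc (0 : ℝ) (y j),
    (if t j k = 1 ∧ v j k + c k * τ < B then (1 : ℝ) else 0)) with hF_def
  -- Step 1: upper bound F k ≤ B / c k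
  have hupper : ∀ k : Fin d, F k ≤ B / c k := by
    intro k
    set A := B / c k with hA_def
    have hA : 0 < A := div_pos (div_pos hγ hsd) (hc k)
    have hcA : c k * A = B := by rw [hA_def, mul_comm, div_mul_cancel₀ _ (hc k).ne']
    set w : ℕ → ℝ := fun i => if h : i < m then y ⟨i,h⟩ * t ⟨i,h⟩ k else 0 with hw_def
    set T : ℕ → ℝ := fun n => ∑ i ∈ Finset.range n, w i with hT_def
    have hw0 : ∀ i, 0 ≤ w i := by
      intro i; simp only [hw_def]; split
      · rcases ht _ k with h|h <;> rw [h]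
        · simp
        · simpa using (hy _).1
      · exact le_refl 0
    have hT0 : ∀ n, 0 ≤ T n := fun n => Finset.sum_nonneg fun i _ => hw0 i
    have hwj : ∀ j : Fin m, w j.val = y j * t j k := by
      intro j; simp only [hw_def, dif_pos j.isLt, Fin.eta]
    have hvT : ∀ j : Fin m, v j k = c k * T j.val := by
      intro j
      rw [hv j k]; congr 1
      rw [Finset.sum_filter]
      calc ∑ j' : Fin m, (if j' < j then y j' * t j' k else 0)
          = ∑ j' : Fin m, (fun i : ℕ => if i < j.val then w i else 0) j'.val := by
            refine Finset.sum_congr rfl fun j' _ => ?_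
            simp only [Fin.lt_def]
            split
            · exact (hwj j').symm
            · rfl
        _ = ∑ i ∈ Finset.range m, (if i < j.val then w i else 0) := by
            exact Fin.sum_univ_eq_sum_range (fun i => if i < j.val then w i else 0) m
        _ = ∑ i ∈ (Finset.range m).filter (· < j.val), w i := (Finset.sum_filter _ _).symm
        _ = ∑ i ∈ Finset.range j.val, w i := by
            congr 1; ext i
            simp only [Finset.mem_filter, Finset.mem_range]
            have := j.isLt; omega
        _ = T j.val := rfl
    have hjint : ∀ j : Fin m, (∫ τ in Set.Ioc (0:ℝ) (y j),
        (if t j k = 1 ∧ v j k + c k * τ < B then (1:ℝ) else 0))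
        = min A (T (j.val+1)) - min A (T j.val) := by
      intro j
      have hTs : T (j.val + 1) = T j.val + w j.val := Finset.sum_range_succ w j.val
      rcases ht j k with h0 | h1
      · simp only [h0, zero_ne_one, false_and, if_false]
        rw [MeasureTheory.integral_zero, hTs, hwj j, h0, mul_zero, add_zero, sub_self]
      · have hiff : ∀ τ:ℝ, (t j k = 1 ∧ v j k + c k * τ < B) ↔ τ < A - T j.val := by
          intro τ
          rw [hvT j]
          constructor
          · rintro ⟨-, h2⟩
            have h3 : c k * (T j.val + τ) < c k * A := by rw [mul_add]; linarith
            have := (mul_lt_mul_iff_right₀ (hc k)).1 h3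
            linarith
          · intro h2
            refine ⟨h1, ?_⟩
            have h3 : c k * (T j.val + τ) < c k * A := (mul_lt_mul_iff_right₀ (hc k)).2 (by linarith)
            rw [mul_add] at h3; linarith
        calc (∫ τ in Set.Ioc (0:ℝ) (y j),
              (if t j k = 1 ∧ v j k + c k * τ < B then (1:ℝ) else 0))
            = ∫ τ in Set.Ioc (0:ℝ) (y j), (if τ < A - T j.val then (1:ℝ) else 0) := by
              simp only [hiff]
          _ = min (y j) (max (A - T j.val) 0) := intlem (y j) (A - T j.val) (hy j).1
          _ = min A (T j.val + y j) - min A (T j.val) := arith A (T j.val) (y j) (hT0 _) (hy j).1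
          _ = min A (T (j.val+1)) - min A (T j.val) := by
              rw [hTs, hwj j, h1, mul_one]
    calc F k = ∑ j, (min A (T (j.val+1)) - min A (T j.val)) :=
          Finset.sum_congr rfl fun j _ => hjint j
      _ = ∑ i ∈ Finset.range m, (min A (T (i+1)) - min A (T i)) := by
          exact Fin.sum_univ_eq_sum_range (fun i => min A (T (i+1)) - min A (T i)) m
      _ = min A (T m) - min A (T 0) := by
          exact Finset.sum_range_sub (fun n => min A (T n)) m
      _ ≤ A := by
          have h0 : T 0 = 0 := Finset.sum_range_zero w
          rw [h0, min_eq_right hA.le, sub_zero]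
          exact min_le_left _ _
  -- Step 2: lower bound
  have hlower : sd * K ≤ ∑ k, F k := by
    simp only [hF_def]
    rw [Finset.sum_comm]
    have hper : ∀ j : Fin m, sd * y j ≤ ∑ k, ∫ τ in Set.Ioc (0:ℝ) (y j),
        (if t j k = 1 ∧ v j k + c k * τ < B then (1:ℝ) else 0) := by
      intro j
      have hint : ∀ k : Fin d, MeasureTheory.IntegrableOn
          (fun τ => if t j k = 1 ∧ v j k + c k * τ < B then (1:ℝ) else 0)
          (Set.Ioc (0:ℝ) (y j)) := by
        intro k
        rcases ht j k with h0 | h1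
        · have he : (fun τ:ℝ => if t j k = 1 ∧ v j k + c k * τ < B then (1:ℝ) else 0)
              = fun _ => 0 := by funext τ; simp [h0]
          rw [he]; exact integrableOn_zero
        · have he : (fun τ:ℝ => if t j k = 1 ∧ v j k + c k * τ < B then (1:ℝ) else 0)
              = (Set.Iio ((B - v j k)/ c k)).indicator (fun _ => (1:ℝ)) := by
            funext τ
            have hiff : (v j k + c k * τ < B) ↔ (τ < (B - v j k)/c k) := by
              rw [lt_div_iff₀ (hc k)]
              constructor <;> intro h <;> nlinarith [mul_comm τ (c k)]
            simp [h1, Set.indicator, Set.mem_Iio, hiff]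
          rw [he]
          exact (MeasureTheory.integrableOn_const
            (measure_Ioc_lt_top).ne).indicator measurableSet_Iio
      rw [← MeasureTheory.integral_finset_sum _ (fun k _ => hint k)]
      rw [MeasureTheory.integral_Ioc_eq_integral_Ioo]
      have hIoo : MeasureTheory.IntegrableOn
          (fun τ => ∑ k, if t j k = 1 ∧ v j k + c k * τ < B then (1:ℝ) else 0)
          (Set.Ioo (0:ℝ) (y j)) := by
        have hIoc : MeasureTheory.IntegrableOn
            (fun τ => ∑ k, if t j k = 1 ∧ v j k + c k * τ < B then (1:ℝ) else 0)
            (Set.Ioc (0:ℝ) (y j)) :=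
          MeasureTheory.integrable_finset_sum _ (fun k _ => hint k)
        exact hIoc.mono_set Set.Ioo_subset_Ioc_self
      have h1 : ∫ τ in Set.Ioo (0:ℝ) (y j), sd ≤ ∫ τ in Set.Ioo (0:ℝ) (y j),
          ∑ k, (if t j k = 1 ∧ v j k + c k * τ < B then (1:ℝ) else 0) := by
        refine MeasureTheory.setIntegral_mono_on
          (MeasureTheory.integrableOn_const (measure_Ioo_lt_top).ne) hIoo
          measurableSet_Ioo ?_
        intro τ hτ
        rw [Finset.sum_boole]
        exact hbig j τ hτ.1.le hτ.2
      calc sd * y j = ∫ τ in Set.Ioo (0:ℝ) (y j), sd := by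
            rw [MeasureTheory.setIntegral_const, Real.volume_real_Ioo_of_le (hy j).1, smul_eq_mul, sub_zero,
              mul_comm]
        _ ≤ _ := h1
    calc sd * K = ∑ j, sd * y j := by rw [← Finset.mul_sum, hysum]
      _ ≤ _ := Finset.sum_le_sum fun j _ => hper j
  -- Step 3
  have hAsum : ∑ k, B / c k ≤ sd * K := by
    have each : ∀ k, B / c k ≤ (K:ℝ) / sd := by
      intro k
      rw [hB_def, div_div, div_le_div_iff₀ (mul_pos hsd (hc k)) hsd]
      nlinarith [hγK k, hsd, hc k]
    calc ∑ k, B / c k ≤ ∑ _k : Fin d, ((K:ℝ) / sd) := Finset.sum_le_sum fun k _ => each k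
      _ = d * ((K:ℝ)/sd) := by
          rw [Finset.sum_const, Finset.card_univ, Fintype.card_fin, nsmul_eq_mul]
      _ = sd * K := by
          have hdd : (d:ℝ) = sd * sd := (Real.mul_self_sqrt hd'.le).symm
          rw [hdd]; field_simp
  -- Step 4: squeeze
  have hle : ∀ k ∈ Finset.univ, F k ≤ B / c k := fun k _ => hupper k
  have hsumeq : ∑ k, F k = ∑ k, B / c k :=
    le_antisymm (Finset.sum_le_sum hle) (le_trans hAsum hlower)
  intro k
  have := (Finset.sum_eq_sum_iff_of_le hle).1 hsumeq k (Finset.mem_univ k)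
  rw [show γ / (sd * c k) = B / c k by rw [hB_def, div_div]]
  exact this
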